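/- arXiv:2401.04418 — 9 statements merged into one kernel-verified Lean document; each statement's English description precedes it below -/
import Mathlib

section
/- Let X be a nonnegative absolutely continuous random variable with density f, and let a > 0, b ≥ 0. The random variable Y = aX + b has density g(y) = (1/a)·f((y−b)/a) for y ≥ b. Then for every α > 0 with α ≠ 1 and every β > 0, R^α_β(Y) = a^{(1−α)(β−1)} · R^α_β(X); equivalently, (1/(1−α))·(∫_b^∞ ((1/a)f((y−b)/a))^α dy)^{β−1} = a^{(1−α)(β−1)} · (1/(1−α))·(∫_0^∞ f(x)^α dx)^{β−1}. -/
open MeasureTheory Set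

/-- RIGF of `Y = aX + b` equals `a^((1-α)(β-1))` times the RIGF of `X`. -/
theorem rigf_affine (f : ℝ → ℝ) (a b α β : ℝ)
    (ha : 0 < a) (hb : 0 ≤ b)
    (hα : 0 < α) (hα1 : α ≠ 1) (hβ : 0 < β)
    (hf_nonneg : ∀ x, 0 ≤ f x)
    (hf_pdf : ∫ x in Ioi (0:ℝ), f x = 1)
    (hf_int : IntegrableOn (fun x => f x ^ α) (Ioi (0:ℝ)))
    (hf_pos : 0 < ∫ x in Ioi (0:ℝ), f x ^ α) :
    (1/(1-α)) * (∫ y in Ioi b, ((1/a) * f ((y - b)/a)) ^ α) ^ (β-1)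
      = a ^ ((1-α)*(β-1)) * ((1/(1-α)) * (∫ x in Ioi (0:ℝ), f x ^ α) ^ (β-1)) := by
  have ha' : (0:ℝ) < 1/a := by positivity
  -- Step 1: pull the constant (1/a)^α out
  have h1 : (∫ y in Ioi b, ((1/a) * f ((y - b)/a)) ^ α)
      = (1/a) ^ α * ∫ y in Ioi b, f ((y - b)/a) ^ α := by
    rw [← integral_const_mul]
    refine setIntegral_congr_fun measurableSet_Ioi fun y _ => ?_
    rw [Real.mul_rpow ha'.le (hf_nonneg _)]
  -- Step 2: translate: ∫ y in Ioi b, g (y - b) = ∫ x in Ioi 0, g x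
  have h2 : (∫ y in Ioi b, f ((y - b)/a) ^ α) = ∫ x in Ioi 0, f (x/a) ^ α := by
    have := MeasureTheory.integral_sub_right_eq_self
      (μ := (volume : Measure ℝ)) (fun y => (Ioi (0:ℝ)).indicator (fun x => f (x/a) ^ α) y) b
    rw [← integral_indicator measurableSet_Ioi, ← integral_indicator measurableSet_Ioi, ← this]
    congr 1
    ext y
    by_cases hy : y ∈ Ioi b
    · have : y - b ∈ Ioi (0:ℝ) := by simp [mem_Ioi] at hy ⊢; linarith
      rw [indicator_of_mem hy, indicator_of_mem this]
    · have : y - b ∉ Ioi (0:ℝ) := by simp [mem_Ioi] at hy ⊢; linarith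
      rw [indicator_of_notMem hy, indicator_of_notMem this]
  -- Step 3: scaling
  have h3 : (∫ x in Ioi (0:ℝ), f (x/a) ^ α) = a * ∫ x in Ioi (0:ℝ), f x ^ α := by
    have := integral_comp_mul_left_Ioi (fun x => f x ^ α) 0 ha'
    simp only [mul_zero, smul_eq_mul] at this
    have e : ∀ x : ℝ, (1/a) * x = x / a := fun x => by ring
    simp_rw [e] at this
    rw [this]
    rw [one_div, inv_inv]
  have hI : (∫ y in Ioi b, ((1/a) * f ((y - b)/a)) ^ α) = a ^ (1-α) * ∫ x in Ioi (0:ℝ), f x ^ α := by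
    rw [h1, h2, h3, one_div, ← Real.rpow_neg_one a, ← Real.rpow_mul ha.le, ← mul_assoc,
      ← Real.rpow_add_one ha.ne']
    ring_nf
  rw [hI, Real.mul_rpow (Real.rpow_nonneg ha.le _) hf_pos.le, ← Real.rpow_mul ha.le]
  ring
end

section
/- Let X be a nonnegative absolutely continuous random variable with density f, let α > 0, α ≠ 1, and set I = ∫_0^∞ f(x)^α dx, assumed to satisfy 0 < I < ∞. Then for every natural number p ≥ 1 and every β > 0, the p-th derivative with respect to β of the map β ↦ R^α_β(X) equals (1/(1−α))·I^{β−1}·(log I)^p. In particular, the first derivative at β = 1 equals the Rényi entropy H_α(X) = (1/(1−α))·log I. -/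
open MeasureTheory Set

lemma rigf_hasDerivAt (I : ℝ) (hIpos : 0 < I) (c : ℝ) (β : ℝ) :
    HasDerivAt (fun b : ℝ => c * I ^ (b - 1)) (c * (I ^ (β - 1) * Real.log I)) β := by
  have h1 : HasDerivAt (fun b : ℝ => b - 1) 1 β := by
    simpa using (hasDerivAt_id β).sub_const 1
  have h2 : HasDerivAt (fun b : ℝ => I ^ (b - 1)) (I ^ (β - 1) * Real.log I) β := by
    have := ((Real.hasStrictDerivAt_const_rpow hIpos (β - 1)).hasDerivAt.comp β h1)
    simpa [Function.comp_def] using this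
  simpa using h2.const_mul c

lemma rigf_iteratedDeriv (I : ℝ) (hIpos : 0 < I) (c : ℝ) (p : ℕ) (β : ℝ) :
    iteratedDeriv p (fun b : ℝ => c * I ^ (b - 1)) β
      = c * I ^ (β - 1) * Real.log I ^ p := by
  induction p generalizing β with
  | zero => simp
  | succ n ih =>
    rw [iteratedDeriv_succ]
    have hfun : iteratedDeriv n (fun b : ℝ => c * I ^ (b - 1))
        = fun β => c * Real.log I ^ n * I ^ (β - 1) := by
      funext x; rw [ih x]; ring
    rw [hfun]
    have := (rigf_hasDerivAt I hIpos (c * Real.log I ^ n) β).deriv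
    rw [this]; ring

/-- the `p`-th derivative in `β` of the RIGF `β ↦ (1/(1-α)) I^(β-1)` is
`(1/(1-α)) I^(β-1) (log I)^p`; in particular the first derivative at `β = 1` is the
Rényi entropy `(1/(1-α)) log I`. -/
theorem rigf_deriv (f : ℝ → ℝ) (α : ℝ)
    (hα : 0 < α) (hα1 : α ≠ 1)
    (hf_nonneg : ∀ x, 0 ≤ f x)
    (hf_pdf : ∫ x in Ioi (0:ℝ), f x = 1)
    (I : ℝ) (hI : I = ∫ x in Ioi (0:ℝ), f x ^ α)
    (hf_int : IntegrableOn (fun x => f x ^ α) (Ioi (0:ℝ)))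
    (hIpos : 0 < I) :
    (∀ p : ℕ, 1 ≤ p → ∀ β : ℝ, 0 < β →
      iteratedDeriv p (fun b : ℝ => (1/(1-α)) * I ^ (b-1)) β
        = (1/(1-α)) * I ^ (β-1) * (Real.log I) ^ p)
    ∧ deriv (fun b : ℝ => (1/(1-α)) * I ^ (b-1)) 1 = (1/(1-α)) * Real.log I := by
  constructor
  · intro p _ β _
    exact rigf_iteratedDeriv I hIpos _ p β
  · have := (rigf_hasDerivAt I hIpos (1/(1-α)) 1).deriv
    rw [this]; norm_num
end

section
/- Let X be a nonnegative absolutely continuous random variable with density f, let α > 0 with α ≠ 1 and β > 0, and assume that ∫_0^∞ f(x)·e^{|1−α|·|log f(x)|} dx < ∞ (the integrand taken as 0 where f(x) = 0). Then the series ∑_{q=0}^∞ ((1−α)^q / q!)·ξ_q(X) converges with sum equal to ∫_0^∞ f(x)^α dx, where ξ_q(X) = ∫_0^∞ f(x)(−log f(x))^q dx is the Shannon entropy of order q; consequently R^α_β(X) = (1/(1−α))·(∑_{q=0}^∞ ((1−α)^q / q!)·ξ_q(X))^{β−1}. -/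
open MeasureTheory Set

lemma pow_div_fact_le_exp (q : ℕ) {t : ℝ} (ht : 0 ≤ t) :
    t ^ q / (q.factorial : ℝ) ≤ Real.exp t := by
  calc t ^ q / (q.factorial : ℝ) ≤ ∑ i ∈ Finset.range (q+1), t ^ i / (i.factorial : ℝ) :=
        Finset.single_le_sum (f := fun i => t ^ i / (i.factorial : ℝ))
          (fun i _ => by positivity) (Finset.self_mem_range_succ q)
    _ ≤ Real.exp t := Real.sum_le_exp_of_nonneg ht _

lemma hasSum_exp_real (x : ℝ) : HasSum (fun n : ℕ => x ^ n / n.factorial) (Real.exp x) := by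
  rw [Real.exp_eq_exp_ℝ]; exact NormedSpace.expSeries_div_hasSum_exp x

/-- under an exponential integrability condition, the series
`∑ q, ((1-α)^q / q!) ξ_q(X)` converges to `∫ f^α`, and consequently the RIGF equals
`(1/(1-α)) (∑ q, ((1-α)^q / q!) ξ_q(X))^(β-1)`. -/
theorem rigf_shannon_series (f : ℝ → ℝ) (α β : ℝ)
    (hα : 0 < α) (hα1 : α ≠ 1) (hβ : 0 < β)
    (hf_nonneg : ∀ x, 0 ≤ f x)
    (hf_pdf : ∫ x in Ioi (0:ℝ), f x = 1)
    (hexp : IntegrableOn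
      (fun x => if f x = 0 then 0 else f x * Real.exp (|1-α| * |Real.log (f x)|))
      (Ioi (0:ℝ))) :
    HasSum (fun q : ℕ => ((1-α)^q / (Nat.factorial q : ℝ)) *
        ∫ x in Ioi (0:ℝ), f x * (-Real.log (f x))^q)
      (∫ x in Ioi (0:ℝ), f x ^ α)
    ∧ (1/(1-α)) * (∫ x in Ioi (0:ℝ), f x ^ α) ^ (β-1)
        = (1/(1-α)) * (∑' q : ℕ, ((1-α)^q / (Nat.factorial q : ℝ)) *
            ∫ x in Ioi (0:ℝ), f x * (-Real.log (f x))^q) ^ (β-1) := by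
  set μ := volume.restrict (Ioi (0:ℝ)) with hμ
  set g : ℝ → ℝ :=
    fun x => if f x = 0 then 0 else f x * Real.exp (|1-α| * |Real.log (f x)|) with hg
  set F : ℕ → ℝ → ℝ :=
    fun q x => ((1-α)^q / (Nat.factorial q : ℝ)) * (f x * (-Real.log (f x))^q) with hF
  -- f is integrable (else its integral would be 0, not 1)
  have hf_int : Integrable f μ := by
    by_contra h
    rw [MeasureTheory.integral_undef h] at hf_pdf
    norm_num at hf_pdf
  have hmeas : AEMeasurable f μ := hf_int.aemeasurable
  have hlog : AEMeasurable (fun x => Real.log (f x)) μ :=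
    Real.measurable_log.comp_aemeasurable hmeas
  have measF : ∀ q, AEStronglyMeasurable (F q) μ := by
    intro q
    exact (aemeasurable_const.mul (hmeas.mul (hlog.neg.pow_const q))).aestronglyMeasurable
  -- compute the norm of each term
  have key : ∀ q x, ‖F q x‖ = f x * ((|1-α| * |Real.log (f x)|)^q / (Nat.factorial q : ℝ)) := by
    intro q x
    rw [hF]
    rw [Real.norm_eq_abs, abs_mul, abs_div, abs_pow, abs_mul, abs_pow, abs_neg,
      abs_of_nonneg (hf_nonneg x), Nat.abs_cast, mul_pow]
    ring
  -- partial sums of norms are bounded by g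
  have hbound_sum : ∀ n x, ∑ q ∈ Finset.range n, ‖F q x‖ ≤ g x := by
    intro n x
    by_cases hfx : f x = 0
    · simp [key, hfx, hg]
    · simp only [key, ← Finset.mul_sum, hg, if_neg hfx]
      refine mul_le_mul_of_nonneg_left ?_ (hf_nonneg x)
      exact Real.sum_le_exp_of_nonneg (by positivity) n
  have hbound_one : ∀ q x, ‖F q x‖ ≤ g x := by
    intro q x
    calc ‖F q x‖ ≤ ∑ i ∈ Finset.range (q+1), ‖F i x‖ :=
          Finset.single_le_sum (f := fun i => ‖F i x‖) (fun i _ => norm_nonneg _) (Finset.self_mem_range_succ q)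
      _ ≤ g x := hbound_sum (q+1) x
  -- each term is integrable
  have hFint : ∀ q, Integrable (F q) μ := fun q =>
    hexp.mono' (measF q) (Filter.Eventually.of_forall (hbound_one q))
  -- the series of integrals of norms is summable
  have hsummable : Summable (fun q => ∫ x, ‖F q x‖ ∂μ) := by
    refine summable_of_sum_range_le (c := ∫ x, g x ∂μ)
      (fun q => integral_nonneg (fun x => norm_nonneg _)) (fun n => ?_)
    rw [← integral_finset_sum _ (fun q _ => (hFint q).norm)]
    exact integral_mono (integrable_finset_sum _ (fun q _ => (hFint q).norm)) hexp
      (hbound_sum n)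
  -- pointwise : the series sums to f x ^ α
  have hpointwise : ∀ x, HasSum (fun q => F q x) (f x ^ α) := by
    intro x
    by_cases hfx : f x = 0
    · have : (fun q => F q x) = fun _ => (0:ℝ) := by
        funext q
        simp [hF, hfx]
      rw [this, hfx, Real.zero_rpow hα.ne']
      exact hasSum_zero
    · have hpos : 0 < f x := lt_of_le_of_ne (hf_nonneg x) (Ne.symm hfx)
      have h1 := (hasSum_exp_real ((1-α) * (-Real.log (f x)))).mul_left (f x)
      have e1 : (fun q : ℕ => f x * (((1-α) * (-Real.log (f x)))^q / (q.factorial : ℝ)))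
          = fun q => F q x := by
        funext q
        rw [hF, mul_pow]
        ring
      have e2 : f x * Real.exp ((1-α) * (-Real.log (f x))) = f x ^ α := by
        have : (1-α) * (-Real.log (f x)) = Real.log (f x) * (α - 1) := by ring
        rw [this, ← Real.rpow_def_of_pos hpos]
        nth_rewrite 1 [← Real.rpow_one (f x)]
        rw [← Real.rpow_add hpos]
        norm_num
      rwa [e1, e2] at h1
  -- the integral of f^α equals the integral of the sum
  have hint_eq : ∫ x, f x ^ α ∂μ = ∫ x, ∑' q, F q x ∂μ := by
    refine integral_congr_ae (Filter.Eventually.of_forall (fun x => ?_))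
    exact ((hpointwise x).tsum_eq).symm
  have hHasSum : HasSum (fun q => ∫ x, F q x ∂μ) (∫ x, f x ^ α ∂μ) := by
    rw [hint_eq]
    exact hasSum_integral_of_summable_integral_norm hFint hsummable
  have hterm : ∀ q, (∫ x, F q x ∂μ)
      = ((1-α)^q / (Nat.factorial q : ℝ)) * ∫ x in Ioi (0:ℝ), f x * (-Real.log (f x))^q := by
    intro q
    rw [hF, hμ]
    exact MeasureTheory.integral_const_mul _ _
  have H1 : HasSum (fun q : ℕ => ((1-α)^q / (Nat.factorial q : ℝ)) *
      ∫ x in Ioi (0:ℝ), f x * (-Real.log (f x))^q) (∫ x in Ioi (0:ℝ), f x ^ α) := by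
    have := hHasSum
    simp_rw [hterm] at this
    exact this
  exact ⟨H1, by rw [H1.tsum_eq]⟩
end

section
/- Let X be a nonnegative absolutely continuous random variable with density f, let 0 < α < 1, and let β > 0 satisfy either 0 < β < 1 or β ≥ 2. Assume 0 < ∫_0^∞ f(x)^α dx < ∞ and ∫_0^∞ f(x)^{αβ−α−β+2} dx < ∞. Then R^α_β(X) ≤ (1/(1−α))·G_{αβ−α−β+2}(X), i.e. (1/(1−α))·(∫_0^∞ f(x)^α dx)^{β−1} ≤ (1/(1−α))·∫_0^∞ f(x)^{αβ−α−β+2} dx. -/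
open MeasureTheory Set
open scoped ENNReal

lemma holder_rpow {μ : Measure ℝ} (f : ℝ → ℝ) (hf0 : ∀ x, 0 ≤ f x)
    (hm : AEMeasurable f μ) (a b l : ℝ) (hl0 : 0 < l) (hl1 : l < 1)
    (hsum : l*a + (1-l)*b ≠ 0)
    (hia : Integrable (fun x => f x ^ a) μ)
    (hib : Integrable (fun x => f x ^ b) μ)
    (hic : Integrable (fun x => f x ^ (l*a + (1-l)*b)) μ) :
    ∫ x, f x ^ (l*a + (1-l)*b) ∂μ
      ≤ (∫ x, f x ^ a ∂μ) ^ l * (∫ x, f x ^ b ∂μ) ^ (1-l) := by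
  have hl1' : 0 < 1 - l := by linarith
  set F : ℝ → ℝ≥0∞ := fun x => ENNReal.ofReal (f x ^ (l*a)) with hF
  set G : ℝ → ℝ≥0∞ := fun x => ENNReal.ofReal (f x ^ ((1-l)*b)) with hG
  have hpq : (1/l).HolderConjugate (1/(1-l)) := by
    constructor
    · rw [one_div, one_div, inv_inv, inv_inv]; ring
    · positivity
    · positivity
  have hFm : AEMeasurable F μ :=
    ENNReal.measurable_ofReal.comp_aemeasurable (hm.pow aemeasurable_const)
  have hGm : AEMeasurable G μ :=
    ENNReal.measurable_ofReal.comp_aemeasurable (hm.pow aemeasurable_const)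
  have key := ENNReal.lintegral_mul_le_Lp_mul_Lq μ hpq hFm hGm
  have hFG : ∀ x, (F * G) x = ENNReal.ofReal (f x ^ (l*a + (1-l)*b)) := by
    intro x
    simp only [Pi.mul_apply, hF, hG]
    rw [← ENNReal.ofReal_mul (Real.rpow_nonneg (hf0 x) _),
      ← Real.rpow_add' (hf0 x) hsum]
  have hFp : ∀ x, F x ^ (1/l) = ENNReal.ofReal (f x ^ a) := by
    intro x
    rw [hF, ENNReal.ofReal_rpow_of_nonneg (Real.rpow_nonneg (hf0 x) _) (by positivity),
      ← Real.rpow_mul (hf0 x)]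
    congr 2
    field_simp
  have hGp : ∀ x, G x ^ (1/(1-l)) = ENNReal.ofReal (f x ^ b) := by
    intro x
    rw [hG, ENNReal.ofReal_rpow_of_nonneg (Real.rpow_nonneg (hf0 x) _) (by positivity),
      ← Real.rpow_mul (hf0 x)]
    congr 2
    field_simp
  simp only [hFG, hFp, hGp] at key
  have hinv : (1:ℝ)/(1/l) = l := by field_simp
  have hinv' : (1:ℝ)/(1/(1-l)) = 1-l := by field_simp
  rw [hinv, hinv'] at key
  -- convert lintegrals to integrals
  have conv : ∀ (e : ℝ), Integrable (fun x => f x ^ e) μ →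
      (∫⁻ x, ENNReal.ofReal (f x ^ e) ∂μ) = ENNReal.ofReal (∫ x, f x ^ e ∂μ) := by
    intro e he
    rw [← ofReal_integral_eq_lintegral_ofReal he
      (Filter.Eventually.of_forall fun x => Real.rpow_nonneg (hf0 x) _)]
  have hIa : (0:ℝ) ≤ ∫ x, f x ^ a ∂μ := integral_nonneg fun x => Real.rpow_nonneg (hf0 x) _
  have hIb : (0:ℝ) ≤ ∫ x, f x ^ b ∂μ := integral_nonneg fun x => Real.rpow_nonneg (hf0 x) _
  rw [conv _ hic, conv _ hia, conv _ hib,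
    ENNReal.ofReal_rpow_of_nonneg hIa hl0.le,
    ENNReal.ofReal_rpow_of_nonneg hIb hl1'.le,
    ← ENNReal.ofReal_mul (Real.rpow_nonneg hIa _)] at key
  exact (ENNReal.ofReal_le_ofReal_iff
    (mul_nonneg (Real.rpow_nonneg hIa _) (Real.rpow_nonneg hIb _))).mp key

/-- for `0 < α < 1` and `0 < β < 1` or `β ≥ 2`,
`R^α_β(X) ≤ (1/(1-α)) G_{αβ-α-β+2}(X)`. -/
theorem rigf_le_igf_of_alpha_lt_one (f : ℝ → ℝ) (α β : ℝ)
    (hα0 : 0 < α) (hα1 : α < 1)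
    (hβ : (0 < β ∧ β < 1) ∨ 2 ≤ β)
    (hf_nonneg : ∀ x, 0 ≤ f x)
    (hf_pdf : ∫ x in Ioi (0:ℝ), f x = 1)
    (hint1 : IntegrableOn (fun x => f x ^ α) (Ioi (0:ℝ)))
    (hpos1 : 0 < ∫ x in Ioi (0:ℝ), f x ^ α)
    (hint2 : IntegrableOn (fun x => f x ^ (α*β - α - β + 2)) (Ioi (0:ℝ))) :
    (1/(1-α)) * (∫ x in Ioi (0:ℝ), f x ^ α) ^ (β-1)
      ≤ (1/(1-α)) * ∫ x in Ioi (0:ℝ), f x ^ (α*β - α - β + 2) := by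
  set γ : ℝ := α*β - α - β + 2 with hγ
  set μ := (volume : Measure ℝ).restrict (Ioi (0:ℝ)) with hμ
  have hc : (0:ℝ) ≤ 1/(1-α) := le_of_lt (div_pos one_pos (by linarith))
  refine mul_le_mul_of_nonneg_left ?_ hc
  -- f is integrable
  have hfint : Integrable f μ := by
    by_contra h
    rw [MeasureTheory.integral_undef h] at hf_pdf
    norm_num at hf_pdf
  -- f is AEMeasurable
  have hm : AEMeasurable f μ := by
    have h1 : AEMeasurable (fun x => f x ^ α) μ :=
      hint1.aestronglyMeasurable.aemeasurable
    have : AEMeasurable (fun x => (f x ^ α) ^ (1/α)) μ := h1.pow aemeasurable_const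
    have heq : (fun x => (f x ^ α) ^ (1/α)) = f := by
      funext x
      rw [← Real.rpow_mul (hf_nonneg x), mul_one_div, div_self hα0.ne', Real.rpow_one]
    rwa [heq] at this
  have hfint1 : Integrable (fun x => f x ^ (1:ℝ)) μ := by
    simpa [Real.rpow_one] using hfint
  have hf_pdf1 : ∫ x, f x ^ (1:ℝ) ∂μ = 1 := by
    simpa [Real.rpow_one] using hf_pdf
  set I := ∫ x, f x ^ α ∂μ with hI
  set J := ∫ x, f x ^ γ ∂μ with hJ
  have hJ0 : 0 ≤ J := integral_nonneg fun x => Real.rpow_nonneg (hf_nonneg x) _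
  show I ^ (β-1) ≤ J
  rcases hβ with ⟨hβ0, hβ1⟩ | hβ2
  · -- case 0 < β < 1
    set l := (1-β)/(2-β) with hl
    have h2β : (0:ℝ) < 2 - β := by linarith
    have hl0 : 0 < l := div_pos (by linarith) h2β
    have hl1 : l < 1 := by rw [div_lt_one h2β]; linarith
    have h1l : 1 - l = 1/(2-β) := by rw [hl]; field_simp; ring
    have hsum : l*α + (1-l)*γ = 1 := by
      rw [h1l, hl, hγ, div_mul_eq_mul_div, div_mul_eq_mul_div, ← add_div,
        div_eq_one_iff_eq h2β.ne']
      ring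
    have key := holder_rpow f hf_nonneg hm α γ l hl0 hl1
      (by rw [hsum]; norm_num) hint1 hint2 (by rw [hsum]; exact hfint1)
    rw [hsum, hf_pdf1] at key
    -- key : 1 ≤ I ^ l * J ^ (1-l)
    have hIle : 0 ≤ I := hpos1.le
    have key2 : 1 ≤ I ^ (1-β) * J := by
      have := Real.rpow_le_rpow (by norm_num) key h2β.le
      rw [Real.one_rpow, Real.mul_rpow (Real.rpow_nonneg hIle _) (Real.rpow_nonneg hJ0 _),
        ← Real.rpow_mul hIle, ← Real.rpow_mul hJ0] at this
      have e1 : l * (2-β) = 1 - β := by rw [hl]; field_simp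
      have e2 : (1-l) * (2-β) = 1 := by rw [h1l]; field_simp
      rwa [e1, e2, Real.rpow_one] at this
    calc I ^ (β-1) = I ^ (β-1) * 1 := by ring
      _ ≤ I ^ (β-1) * (I ^ (1-β) * J) :=
          mul_le_mul_of_nonneg_left key2 (Real.rpow_nonneg hIle _)
      _ = (I ^ (β-1) * I ^ (1-β)) * J := by ring
      _ = J := by
          rw [← Real.rpow_add hpos1]
          norm_num
  · -- case β ≥ 2
    rcases eq_or_lt_of_le hβ2 with hβeq | hβgt
    · have hαγ : γ = α := by rw [hγ, ← hβeq]; ring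
      rw [show β - 1 = 1 by linarith [hβeq], Real.rpow_one, hI, hJ, hαγ]
    · set l := 1/(β-1) with hl
      have hβ1 : (0:ℝ) < β - 1 := by linarith
      have hl0 : 0 < l := div_pos one_pos hβ1
      have hl1 : l < 1 := by rw [hl, div_lt_one hβ1]; linarith
      have h1l : 1 - l = (β-2)/(β-1) := by rw [hl]; field_simp; ring
      have hsum : l*γ + (1-l)*1 = α := by
        rw [h1l, hl, hγ, div_mul_eq_mul_div, div_mul_eq_mul_div, ← add_div,
          div_eq_iff hβ1.ne']
        ring
      have key := holder_rpow f hf_nonneg hm γ 1 l hl0 hl1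
        (by rw [hsum]; exact hα0.ne') hint2 hfint1 (by rw [hsum]; exact hint1)
      rw [hsum, hf_pdf1, Real.one_rpow, mul_one] at key
      -- key : I ≤ J ^ l
      have := Real.rpow_le_rpow hpos1.le key hβ1.le
      rwa [← Real.rpow_mul hJ0, hl, one_div, inv_mul_cancel₀ hβ1.ne', Real.rpow_one] at this
end

section
/- Let X be a nonnegative absolutely continuous random variable with density f and let 0 < α < 1, with 0 < ∫_0^∞ f(x)^α dx < ∞ and 0 < ∫_0^∞ f(x)^{(α+1)/2} dx < ∞. Then: (i) if β ≥ 1, R^α_β(X) ≥ (1/2)·R^{(α+1)/2}_{2β−1}(X); (ii) if 0 < β < 1, R^α_β(X) ≤ (1/2)·R^{(α+1)/2}_{2β−1}(X). Explicitly, (1/(1−α))·(∫_0^∞ f^α)^{β−1} ≥ (respectively ≤) (1/(1−α))·(∫_0^∞ f^{(α+1)/2})^{2(β−1)}. -/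
open MeasureTheory Set

/-- for `0 < α < 1`: if `β ≥ 1` then
`R^α_β(X) ≥ (1/2) R^{(α+1)/2}_{2β-1}(X)`, and if `0 < β < 1` the reverse inequality holds.
Explicitly, `(1/(1-α)) (∫ f^α)^(β-1) ≥ (≤) (1/(1-α)) (∫ f^((α+1)/2))^(2(β-1))`. -/
theorem rigf_cauchy_schwarz_bound_alpha_lt_one (f : ℝ → ℝ) (α β : ℝ)
    (hα0 : 0 < α) (hα1 : α < 1)
    (hf_nonneg : ∀ x, 0 ≤ f x)
    (hf_pdf : ∫ x in Ioi (0:ℝ), f x = 1)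
    (hint1 : IntegrableOn (fun x => f x ^ α) (Ioi (0:ℝ)))
    (hpos1 : 0 < ∫ x in Ioi (0:ℝ), f x ^ α)
    (hint2 : IntegrableOn (fun x => f x ^ ((α+1)/2)) (Ioi (0:ℝ)))
    (hpos2 : 0 < ∫ x in Ioi (0:ℝ), f x ^ ((α+1)/2)) :
    (1 ≤ β →
      (1/(1-α)) * (∫ x in Ioi (0:ℝ), f x ^ ((α+1)/2)) ^ (2*(β-1))
        ≤ (1/(1-α)) * (∫ x in Ioi (0:ℝ), f x ^ α) ^ (β-1))
    ∧ (0 < β → β < 1 →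
      (1/(1-α)) * (∫ x in Ioi (0:ℝ), f x ^ α) ^ (β-1)
        ≤ (1/(1-α)) * (∫ x in Ioi (0:ℝ), f x ^ ((α+1)/2)) ^ (2*(β-1))) := by
  set μ := (volume : Measure ℝ).restrict (Ioi (0:ℝ))
  -- f is integrable on Ioi 0
  have hf_int : IntegrableOn f (Ioi (0:ℝ)) := by
    by_contra h
    rw [integral_undef h] at hf_pdf
    norm_num at hf_pdf
  -- a.e. measurability of f
  have hfα_meas : AEMeasurable (fun x => f x ^ α) μ :=
    hint1.aestronglyMeasurable.aemeasurable
  have hf_meas : AEMeasurable f μ := by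
    have : (fun x => (f x ^ α) ^ α⁻¹) = f := by
      funext x
      rw [← Real.rpow_mul (hf_nonneg x), mul_inv_cancel₀ hα0.ne', Real.rpow_one]
    exact this ▸ hfα_meas.pow aemeasurable_const
  -- the two L² functions
  set g1 : ℝ → ℝ := fun x => f x ^ (α/2) with hg1
  set g2 : ℝ → ℝ := fun x => f x ^ ((1:ℝ)/2) with hg2
  have hg1_sq : ∀ x, g1 x ^ (2:ℕ) = f x ^ α := by
    intro x
    rw [hg1, sq, ← Real.rpow_add' (hf_nonneg x) (by linarith)]
    norm_num
  have hg2_sq : ∀ x, g2 x ^ (2:ℕ) = f x := by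
    intro x
    rw [hg2, sq, ← Real.rpow_add' (hf_nonneg x) (by norm_num)]
    norm_num
  have hg1_mem : MemLp g1 2 μ := by
    rw [memLp_two_iff_integrable_sq ((hf_meas.pow aemeasurable_const).aestronglyMeasurable)]
    exact (integrable_congr (Filter.Eventually.of_forall hg1_sq)).mpr hint1
  have hg2_mem : MemLp g2 2 μ := by
    rw [memLp_two_iff_integrable_sq ((hf_meas.pow aemeasurable_const).aestronglyMeasurable)]
    exact (integrable_congr (Filter.Eventually.of_forall hg2_sq)).mpr hf_int
  -- Cauchy–Schwarz
  have h2 : ENNReal.ofReal (2:ℝ) = 2 := by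
    rw [ENNReal.ofReal_ofNat]
  have hCS := integral_mul_le_Lp_mul_Lq_of_nonneg (μ := μ)
    (p := 2) (q := 2) (by constructor <;> norm_num)
    (Filter.Eventually.of_forall fun x => Real.rpow_nonneg (hf_nonneg x) _)
    (Filter.Eventually.of_forall fun x => Real.rpow_nonneg (hf_nonneg x) _)
    (h2 ▸ hg1_mem) (h2 ▸ hg2_mem)
  have hprod : ∀ x, g1 x * g2 x = f x ^ ((α+1)/2) := by
    intro x
    rw [hg1, hg2, ← Real.rpow_add' (hf_nonneg x) (by linarith)]
    ring_nf
  have hsq1 : ∀ x, g1 x ^ (2:ℝ) = f x ^ α := by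
    intro x; rw [Real.rpow_two]; exact hg1_sq x
  have hsq2 : ∀ x, g2 x ^ (2:ℝ) = f x := by
    intro x; rw [Real.rpow_two]; exact hg2_sq x
  change ∫ a, g1 a * g2 a ∂μ ≤ (∫ a, g1 a ^ (2:ℝ) ∂μ) ^ (1/2:ℝ) * (∫ a, g2 a ^ (2:ℝ) ∂μ) ^ (1/2:ℝ) at hCS
  simp only [hprod] at hCS
  rw [integral_congr_ae (Filter.Eventually.of_forall hsq1),
      integral_congr_ae (Filter.Eventually.of_forall hsq2), hf_pdf] at hCS
  simp only [Real.one_rpow, mul_one] at hCS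
  set I1 := ∫ x in Ioi (0:ℝ), f x ^ α with hI1
  set I2 := ∫ x in Ioi (0:ℝ), f x ^ ((α+1)/2) with hI2
  have hCS' : I2 ^ (2:ℝ) ≤ I1 := by
    calc I2 ^ (2:ℝ) ≤ (I1 ^ (1/2:ℝ)) ^ (2:ℝ) :=
          Real.rpow_le_rpow hpos2.le hCS (by norm_num)
      _ = I1 := by
          rw [← Real.rpow_mul hpos1.le]
          norm_num
  have hc : (0:ℝ) < 1/(1-α) := by
    apply div_pos one_pos; linarith
  have hrw : I2 ^ (2*(β-1)) = (I2 ^ (2:ℝ)) ^ (β-1) := by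
    rw [← Real.rpow_mul hpos2.le]
  constructor
  · intro hβ
    apply mul_le_mul_of_nonneg_left _ hc.le
    rw [hrw]
    exact Real.rpow_le_rpow (Real.rpow_nonneg hpos2.le _) hCS' (by linarith)
  · intro hβ0 hβ1
    apply mul_le_mul_of_nonneg_left _ hc.le
    rw [hrw]
    exact Real.rpow_le_rpow_of_nonpos (Real.rpow_pos_of_pos hpos2 _) hCS' (by linarith)
end

section
/- Let X be a nonnegative absolutely continuous random variable with density f, let α > 1 and 1 < β < 2. Assume 0 < ∫_0^∞ f(x)^α dx < ∞ and ∫_0^∞ f(x)^{αβ−α−β+2} dx < ∞. Then R^α_β(X) ≤ (1/(1−α))·G_{αβ−α−β+2}(X), i.e. (1/(1−α))·(∫_0^∞ f(x)^α dx)^{β−1} ≤ (1/(1−α))·∫_0^∞ f(x)^{αβ−α−β+2} dx (note 1/(1−α) < 0 here). -/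
open MeasureTheory Set

/-- for `α > 1` and `1 < β < 2`,
`R^α_β(X) ≤ (1/(1-α)) G_{αβ-α-β+2}(X)`. -/
theorem rigf_le_igf_of_one_lt_alpha (f : ℝ → ℝ) (α β : ℝ)
    (hα : 1 < α)
    (hβ1 : 1 < β) (hβ2 : β < 2)
    (hf_nonneg : ∀ x, 0 ≤ f x)
    (hf_pdf : ∫ x in Ioi (0:ℝ), f x = 1)
    (hint1 : IntegrableOn (fun x => f x ^ α) (Ioi (0:ℝ)))
    (hpos1 : 0 < ∫ x in Ioi (0:ℝ), f x ^ α)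
    (hint2 : IntegrableOn (fun x => f x ^ (α*β - α - β + 2)) (Ioi (0:ℝ))) :
    (1/(1-α)) * (∫ x in Ioi (0:ℝ), f x ^ α) ^ (β-1)
      ≤ (1/(1-α)) * ∫ x in Ioi (0:ℝ), f x ^ (α*β - α - β + 2) := by
  set μ := (volume : Measure ℝ).restrict (Ioi (0:ℝ)) with hμ
  set γ := β - 1 with hγ
  have hγ0 : 0 < γ := by simp [hγ]; linarith
  have hγ1 : γ < 1 := by simp [hγ]; linarith
  set δ := α*β - α - β + 2 with hδ
  have hδeq : δ = α * γ + (1 - γ) := by ring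
  have hδ0 : 0 < δ := by nlinarith
  -- integrability of f
  have hf_int : IntegrableOn f (Ioi (0:ℝ)) := by
    by_contra h
    rw [MeasureTheory.integral_undef h] at hf_pdf
    norm_num at hf_pdf
  have hfm : AEMeasurable f μ := hf_int.aemeasurable
  set g : ℝ → ENNReal := fun x => ENNReal.ofReal (f x) with hg
  have hgm : AEMeasurable g μ := hfm.ennreal_ofReal
  have hnn : ∀ p : ℝ, (0:ℝ→ℝ) ≤ᵐ[μ] fun x => f x ^ p := fun p =>
    Filter.Eventually.of_forall fun x => Real.rpow_nonneg (hf_nonneg x) p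
  have hkey : ∀ p : ℝ, 0 ≤ p → ∀ x, g x ^ p = ENNReal.ofReal (f x ^ p) := by
    intro p hp x
    rw [hg]
    exact ENNReal.ofReal_rpow_of_nonneg (hf_nonneg x) hp
  -- lintegral identities
  have L1 : ∫⁻ x, g x ∂μ = 1 := by
    rw [hg, ← MeasureTheory.ofReal_integral_eq_lintegral_ofReal hf_int
      (Filter.Eventually.of_forall hf_nonneg), hf_pdf]
    simp
  have Lα : ∫⁻ x, g x ^ α ∂μ = ENNReal.ofReal (∫ x in Ioi (0:ℝ), f x ^ α) := by
    rw [lintegral_congr (hkey α (le_of_lt (lt_trans one_pos hα)))]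
    exact (MeasureTheory.ofReal_integral_eq_lintegral_ofReal hint1 (hnn α)).symm
  have Lδ : ∫⁻ x, g x ^ δ ∂μ = ENNReal.ofReal (∫ x in Ioi (0:ℝ), f x ^ δ) := by
    rw [lintegral_congr (hkey δ hδ0.le)]
    exact (MeasureTheory.ofReal_integral_eq_lintegral_ofReal hint2 (hnn δ)).symm
  -- Hölder
  have hpq : (1/γ).HolderConjugate (1/(1-γ)) := by
    rw [Real.holderConjugate_iff]; constructor
    · rw [lt_div_iff₀ hγ0]; linarith
    · simp only [one_div, inv_inv]; ring
  have holder := ENNReal.lintegral_mul_le_Lp_mul_Lq μ hpq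
    (f := fun x => g x ^ (α * γ)) (g := fun x => g x ^ (1 - γ))
    (hgm.pow_const _) (hgm.pow_const _)
  have e1 : ∀ x, (fun x => g x ^ (α * γ)) x * (fun x => g x ^ (1-γ)) x = g x ^ δ := by
    intro x
    simp only [hδeq]
    rw [ENNReal.rpow_add_of_nonneg _ _ (by positivity) (by linarith)]
  have e2 : ∀ x, ((fun x => g x ^ (α * γ)) x) ^ (1/γ) = g x ^ α := by
    intro x
    rw [← ENNReal.rpow_mul]
    congr 1
    field_simp
  have e3 : ∀ x, ((fun x => g x ^ (1-γ)) x) ^ (1/(1-γ)) = g x := by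
    intro x
    rw [← ENNReal.rpow_mul]
    rw [mul_one_div, div_self (by linarith), ENNReal.rpow_one]
  rw [lintegral_congr e2, lintegral_congr e3] at holder
  have holder2 : ∫⁻ x, g x ^ δ ∂μ ≤ (∫⁻ x, g x ^ α ∂μ) ^ γ := by
    calc ∫⁻ x, g x ^ δ ∂μ = ∫⁻ x, (fun x => g x ^ (α*γ)) x * (fun x => g x ^ (1-γ)) x ∂μ :=
          (lintegral_congr e1).symm
      _ ≤ (∫⁻ x, g x ^ α ∂μ) ^ (1/(1/γ)) * (∫⁻ x, g x ∂μ) ^ (1/(1/(1-γ))) := holder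
      _ = (∫⁻ x, g x ^ α ∂μ) ^ γ := by
          rw [L1, one_div_one_div, one_div_one_div, ENNReal.one_rpow, mul_one]
  rw [Lα, Lδ, ENNReal.ofReal_rpow_of_nonneg hpos1.le hγ0.le] at holder2
  have hmain : (∫ x in Ioi (0:ℝ), f x ^ δ) ≤ (∫ x in Ioi (0:ℝ), f x ^ α) ^ γ := by
    have hrhs : (0:ℝ) ≤ (∫ x in Ioi (0:ℝ), f x ^ α) ^ γ := Real.rpow_nonneg hpos1.le γ
    exact (ENNReal.ofReal_le_ofReal_iff hrhs).mp holder2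
  have hc : (1/(1-α)) ≤ 0 := by
    apply div_nonpos_of_nonneg_of_nonpos <;> linarith
  simpa [hγ, hδ] using mul_le_mul_of_nonpos_left hmain hc
end

section
/- Let X be a nonnegative absolutely continuous random variable with density f and let α > 1, with 0 < ∫_0^∞ f(x)^α dx < ∞ and 0 < ∫_0^∞ f(x)^{(α+1)/2} dx < ∞. Then: (i) if β ≥ 1, R^α_β(X) ≤ (1/2)·R^{(α+1)/2}_{2β−1}(X); (ii) if 0 < β < 1, R^α_β(X) ≥ (1/2)·R^{(α+1)/2}_{2β−1}(X). Explicitly, (1/(1−α))·(∫_0^∞ f^α)^{β−1} ≤ (respectively ≥) (1/(1−α))·(∫_0^∞ f^{(α+1)/2})^{2(β−1)}. -/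
open MeasureTheory Set

/-- for `α > 1`: if `β ≥ 1` then
`R^α_β(X) ≤ (1/2) R^{(α+1)/2}_{2β-1}(X)`, and if `0 < β < 1` the reverse inequality holds.
Explicitly, `(1/(1-α)) (∫ f^α)^(β-1) ≤ (≥) (1/(1-α)) (∫ f^((α+1)/2))^(2(β-1))`. -/
theorem rigf_cauchy_schwarz_bound_one_lt_alpha (f : ℝ → ℝ) (α β : ℝ)
    (hα : 1 < α)
    (hf_nonneg : ∀ x, 0 ≤ f x)
    (hf_pdf : ∫ x in Ioi (0:ℝ), f x = 1)
    (hint1 : IntegrableOn (fun x => f x ^ α) (Ioi (0:ℝ)))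
    (hpos1 : 0 < ∫ x in Ioi (0:ℝ), f x ^ α)
    (hint2 : IntegrableOn (fun x => f x ^ ((α+1)/2)) (Ioi (0:ℝ)))
    (hpos2 : 0 < ∫ x in Ioi (0:ℝ), f x ^ ((α+1)/2)) :
    (1 ≤ β →
      (1/(1-α)) * (∫ x in Ioi (0:ℝ), f x ^ α) ^ (β-1)
        ≤ (1/(1-α)) * (∫ x in Ioi (0:ℝ), f x ^ ((α+1)/2)) ^ (2*(β-1)))
    ∧ (0 < β → β < 1 →
      (1/(1-α)) * (∫ x in Ioi (0:ℝ), f x ^ ((α+1)/2)) ^ (2*(β-1))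
        ≤ (1/(1-α)) * (∫ x in Ioi (0:ℝ), f x ^ α) ^ (β-1)) := by
  set μ := (volume : Measure ℝ).restrict (Ioi (0:ℝ)) with hμ
  set J := ∫ x in Ioi (0:ℝ), f x ^ α with hJ
  set I := ∫ x in Ioi (0:ℝ), f x ^ ((α+1)/2) with hI
  have hf_int : Integrable f μ := integrable_of_integral_eq_one hf_pdf
  have hf_meas : AEMeasurable f μ := hf_int.aemeasurable
  have hmeas1 : AEStronglyMeasurable (fun x => f x ^ (α/2)) μ :=
    ((Real.continuous_rpow_const (by positivity)).measurable.comp_aemeasurable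
      hf_meas).aestronglyMeasurable
  have hmeas2 : AEStronglyMeasurable (fun x => f x ^ ((1:ℝ)/2)) μ :=
    ((Real.continuous_rpow_const (by norm_num)).measurable.comp_aemeasurable
      hf_meas).aestronglyMeasurable
  have hsq1 : ∀ x, (f x ^ (α/2)) ^ (2:ℕ) = f x ^ α := by
    intro x
    rw [← Real.rpow_natCast (f x ^ (α/2)) 2, ← Real.rpow_mul (hf_nonneg x)]
    norm_num
  have hsq2 : ∀ x, (f x ^ ((1:ℝ)/2)) ^ (2:ℕ) = f x := by
    intro x
    rw [← Real.rpow_natCast (f x ^ ((1:ℝ)/2)) 2, ← Real.rpow_mul (hf_nonneg x)]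
    norm_num
  have hmem1 : MemLp (fun x => f x ^ (α/2)) (ENNReal.ofReal 2) μ := by
    have h2 : ENNReal.ofReal 2 = 2 := by norm_num
    rw [h2, memLp_two_iff_integrable_sq hmeas1]
    exact hint1.congr_fun (fun x _ => (hsq1 x).symm) measurableSet_Ioi
  have hmem2 : MemLp (fun x => f x ^ ((1:ℝ)/2)) (ENNReal.ofReal 2) μ := by
    have h2 : ENNReal.ofReal 2 = 2 := by norm_num
    rw [h2, memLp_two_iff_integrable_sq hmeas2]
    exact hf_int.congr (Filter.Eventually.of_forall fun x => (hsq2 x).symm)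
  have hconj : Real.HolderConjugate 2 2 := ⟨by norm_num, by norm_num, by norm_num⟩
  have hCS := MeasureTheory.integral_mul_le_Lp_mul_Lq_of_nonneg hconj
    (Filter.Eventually.of_forall fun x => Real.rpow_nonneg (hf_nonneg x) _)
    (Filter.Eventually.of_forall fun x => Real.rpow_nonneg (hf_nonneg x) _)
    hmem1 hmem2
  -- rewrite the three integrals in hCS
  have hprod : ∀ x, f x ^ (α/2) * f x ^ ((1:ℝ)/2) = f x ^ ((α+1)/2) := by
    intro x
    rw [← Real.rpow_add_of_nonneg (hf_nonneg x) (by positivity) (by norm_num)]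
    ring_nf
  have hkey : I ^ 2 ≤ J := by
    have e1 : ∫ a, f a ^ (α/2) * f a ^ ((1:ℝ)/2) ∂μ = I := by
      rw [hI]; exact integral_congr_ae (Filter.Eventually.of_forall fun x => hprod x)
    have e2 : ∫ a, (f a ^ (α/2)) ^ (2:ℝ) ∂μ = J := by
      rw [hJ]
      refine integral_congr_ae (Filter.Eventually.of_forall fun x => ?_)
      show (f x ^ (α/2)) ^ (2:ℝ) = f x ^ α
      rw [Real.rpow_two, hsq1 x]
    have e3 : ∫ a, (f a ^ ((1:ℝ)/2)) ^ (2:ℝ) ∂μ = 1 := by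
      have heq : ∫ a, (f a ^ ((1:ℝ)/2)) ^ (2:ℝ) ∂μ = ∫ a, f a ∂μ := by
        refine integral_congr_ae (Filter.Eventually.of_forall fun x => ?_)
        show (f x ^ ((1:ℝ)/2)) ^ (2:ℝ) = f x
        rw [Real.rpow_two, hsq2 x]
      rw [heq, hf_pdf]
    rw [e1, e2, e3] at hCS
    have hCS' : I ≤ J ^ ((1:ℝ)/2) := by
      calc I ≤ J ^ ((1:ℝ)/2) * (1:ℝ) ^ ((1:ℝ)/2) := hCS
        _ = J ^ ((1:ℝ)/2) := by rw [Real.one_rpow, mul_one]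
    have hJ2 : (J ^ ((1:ℝ)/2)) ^ 2 = J := by
      rw [← Real.rpow_natCast (J ^ ((1:ℝ)/2)) 2, ← Real.rpow_mul hpos1.le]
      norm_num
    calc I ^ 2 ≤ (J ^ ((1:ℝ)/2)) ^ 2 := by
          apply pow_le_pow_left₀ hpos2.le hCS'
      _ = J := hJ2
  have hIexp : ∀ γ : ℝ, I ^ (2*γ) = (I ^ 2 : ℝ) ^ γ := by
    intro γ
    rw [← Real.rpow_natCast I 2, ← Real.rpow_mul hpos2.le]
    norm_num [mul_comm]
  have hneg : (1/(1-α)) ≤ 0 := by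
    apply div_nonpos_of_nonneg_of_nonpos <;> linarith
  constructor
  · intro hβ
    rw [hIexp (β-1)]
    apply mul_le_mul_of_nonpos_left _ hneg
    exact Real.rpow_le_rpow (by positivity) hkey (by linarith)
  · intro hβ0 hβ1
    rw [hIexp (β-1)]
    apply mul_le_mul_of_nonpos_left _ hneg
    have h1 : J ^ (β-1) ≤ (I^2 : ℝ) ^ (β-1) := by
      apply Real.rpow_le_rpow_of_nonpos (by positivity) hkey (by linarith)
    exact h1
end

section
/- Let T be the lifetime of a coherent system whose components are identically distributed with continuous, strictly increasing CDF F and density f, and with distortion function q : [0,1] → [0,1] (increasing, continuously differentiable, q(0)=0, q(1)=1), so that T has CDF q(F(x)) and density f_T(x) = q′(F(x))·f(x), and R^α_β(T) = (1/(1−α))·(∫_0^1 q′(u)^α f(F⁻¹(u))^{α−1} du)^{β−1}. Write ψ_α(q(u)) = (q′(u) f(F⁻¹(u)))^α and φ_α(u) = f(F⁻¹(u))^α, and assume the integrals defining R^α_β(T) and R^α_β(X) are finite and positive. If ψ_α(q(u)) ≥ φ_α(u) for all u ∈ (0,1), then: (i) R^α_β(T) ≥ R^α_β(X) when {α > 1,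 0 < β ≤ 1} or {0 < α < 1, β ≥ 1}; (ii) R^α_β(T) ≤ R^α_β(X) when {α > 1, β ≥ 1} or {0 < α < 1, 0 < β ≤ 1}. -/
open MeasureTheory Set

/-- for a coherent system with lifetime `T`, distortion function `q` and
component lifetime `X`, if `ψ_α(q(u)) = (q'(u) f(F⁻¹(u)))^α ≥ φ_α(u) = f(F⁻¹(u))^α` for
all `u ∈ (0,1)`, then `R^α_β(T) ≥ R^α_β(X)` when `{α > 1, 0 < β ≤ 1}` or
`{0 < α < 1, β ≥ 1}`, and `R^α_β(T) ≤ R^α_β(X)` when `{α > 1, β ≥ 1}` or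
`{0 < α < 1, 0 < β ≤ 1}`. -/
theorem rigf_coherent_vs_component (f F Finv q q' : ℝ → ℝ) (α β : ℝ)
    (hα : 0 < α) (hα1 : α ≠ 1) (hβ : 0 < β)
    (hf_nonneg : ∀ x, 0 ≤ f x)
    (hf_pdf : ∫ x in Ioi (0:ℝ), f x = 1)
    (hF_cont : Continuous F) (hF_mono : StrictMono F)
    (hFinv : ∀ u ∈ Ioo (0:ℝ) 1, F (Finv u) = u)
    (hq_mono : MonotoneOn q (Icc (0:ℝ) 1)) (hq0 : q 0 = 0) (hq1 : q 1 = 1)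
    (hq_maps : ∀ u ∈ Icc (0:ℝ) 1, q u ∈ Icc (0:ℝ) 1)
    (hq_deriv : ∀ u ∈ Ioo (0:ℝ) 1, HasDerivAt q (q' u) u)
    (hq'_cont : ContinuousOn q' (Ioo (0:ℝ) 1))
    (hintT : IntegrableOn (fun u => (q' u) ^ α * f (Finv u) ^ (α-1)) (Ioo (0:ℝ) 1))
    (hposT : 0 < ∫ u in Ioo (0:ℝ) 1, (q' u) ^ α * f (Finv u) ^ (α-1))
    (hintX : IntegrableOn (fun u => f (Finv u) ^ (α-1)) (Ioo (0:ℝ) 1))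
    (hposX : 0 < ∫ u in Ioo (0:ℝ) 1, f (Finv u) ^ (α-1))
    (hψφ : ∀ u ∈ Ioo (0:ℝ) 1, (f (Finv u)) ^ α ≤ (q' u * f (Finv u)) ^ α) :
    (((1 < α ∧ β ≤ 1) ∨ (α < 1 ∧ 1 ≤ β)) →
      (1/(1-α)) * (∫ u in Ioo (0:ℝ) 1, f (Finv u) ^ (α-1)) ^ (β-1)
        ≤ (1/(1-α)) * (∫ u in Ioo (0:ℝ) 1, (q' u) ^ α * f (Finv u) ^ (α-1)) ^ (β-1))
    ∧ (((1 < α ∧ 1 ≤ β) ∨ (α < 1 ∧ β ≤ 1)) →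
      (1/(1-α)) * (∫ u in Ioo (0:ℝ) 1, (q' u) ^ α * f (Finv u) ^ (α-1)) ^ (β-1)
        ≤ (1/(1-α)) * (∫ u in Ioo (0:ℝ) 1, f (Finv u) ^ (α-1)) ^ (β-1)) := by
  -- q' is nonnegative on (0,1) since q is monotone
  have hq'_nonneg : ∀ u ∈ Ioo (0:ℝ) 1, 0 ≤ q' u := by
    intro u hu
    have hd := hq_deriv u hu
    have ht : Filter.Tendsto (slope q u) (nhdsWithin u (Ioi u)) (nhds (q' u)) :=
      (hasDerivAt_iff_tendsto_slope.mp hd).mono_left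
        (nhdsWithin_mono _ (fun y hy => ne_of_gt hy))
    refine ge_of_tendsto ht ?_
    filter_upwards [Ioo_mem_nhdsGT_of_mem ⟨le_refl u, hu.2⟩] with y hy
    have hqle : q u ≤ q y :=
      hq_mono ⟨hu.1.le, hu.2.le⟩ ⟨(hu.1.trans hy.1).le, hy.2.le⟩ hy.1.le
    rw [slope_def_field]
    exact div_nonneg (by linarith) (by linarith [hy.1])
  -- pointwise inequality of integrands
  have hpt : ∀ u ∈ Ioo (0:ℝ) 1,
      f (Finv u) ^ (α-1) ≤ (q' u) ^ α * f (Finv u) ^ (α-1) := by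
    intro u hu
    set a := f (Finv u) with ha
    have ha0 : 0 ≤ a := hf_nonneg _
    rcases eq_or_lt_of_le ha0 with h0 | hpos
    · rw [← h0, Real.zero_rpow (by intro h; apply hα1; linarith [sub_eq_zero.mp h])]
      simp
    · have hψ := hψφ u hu
      rw [Real.mul_rpow (hq'_nonneg u hu) ha0] at hψ
      have haα : 0 < a ^ α := Real.rpow_pos_of_pos hpos α
      have h1 : 1 ≤ (q' u) ^ α := by
        rw [← mul_le_mul_iff_of_pos_right haα]; simpa using hψ
      have : 0 < a ^ (α - 1) := Real.rpow_pos_of_pos hpos _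
      nlinarith
  -- integral inequality
  have hAB : (∫ u in Ioo (0:ℝ) 1, f (Finv u) ^ (α-1))
      ≤ ∫ u in Ioo (0:ℝ) 1, (q' u) ^ α * f (Finv u) ^ (α-1) :=
    setIntegral_mono_on hintX hintT measurableSet_Ioo hpt
  set A := ∫ u in Ioo (0:ℝ) 1, f (Finv u) ^ (α-1) with hA
  set B := ∫ u in Ioo (0:ℝ) 1, (q' u) ^ α * f (Finv u) ^ (α-1) with hB
  constructor
  · rintro (⟨hα', hβ'⟩ | ⟨hα', hβ'⟩)
    · -- α > 1, β ≤ 1 : factor negative, exponent nonpositive: B^(β-1) ≤ A^(β-1)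
      have hrp : B ^ (β-1) ≤ A ^ (β-1) :=
        Real.rpow_le_rpow_of_nonpos hposX hAB (by linarith)
      have hfac : (1/(1-α)) ≤ 0 := by
        apply div_nonpos_of_nonneg_of_nonpos <;> linarith
      exact mul_le_mul_of_nonpos_left hrp hfac
    · -- α < 1, β ≥ 1 : factor positive, exponent nonneg: A^(β-1) ≤ B^(β-1)
      have hrp : A ^ (β-1) ≤ B ^ (β-1) :=
        Real.rpow_le_rpow hposX.le hAB (by linarith)
      have hfac : 0 ≤ (1/(1-α)) := by apply div_nonneg <;> linarith
      exact mul_le_mul_of_nonneg_left hrp hfac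
  · rintro (⟨hα', hβ'⟩ | ⟨hα', hβ'⟩)
    · have hrp : A ^ (β-1) ≤ B ^ (β-1) :=
        Real.rpow_le_rpow hposX.le hAB (by linarith)
      have hfac : (1/(1-α)) ≤ 0 := by
        apply div_nonpos_of_nonneg_of_nonpos <;> linarith
      exact mul_le_mul_of_nonpos_left hrp hfac
    · have hrp : B ^ (β-1) ≤ A ^ (β-1) :=
        Real.rpow_le_rpow_of_nonpos hposX hAB (by linarith)
      have hfac : 0 ≤ (1/(1-α)) := by apply div_nonneg <;> linarith
      exact mul_le_mul_of_nonneg_left hrp hfac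
end

section
/- Let T be the lifetime of a coherent system with identically distributed components having continuous, strictly increasing CDF F and density f, and distortion function q : [0,1] → [0,1] (increasing, continuously differentiable, q(0)=0, q(1)=1), so that R^α_β(T) = (1/(1−α))·(∫_0^1 q′(u)^α f(F⁻¹(u))^{α−1} du)^{β−1} and R^α_β(X) = (1/(1−α))·(∫_0^1 f(F⁻¹(u))^{α−1} du)^{β−1}. Write ψ_α(q(u))/φ_α(u) = q′(u)^α for the ratio of ψ_α(q(u)) = (q′(u) f(F⁻¹(u)))^α to φ_α(u) = f(F⁻¹(u))^α, and set ξ_{1,α} = (inf_{u∈(0,1)} ψ_α(q(u))/φ_α(u))^{β−1} and ξ_{2,α} = (sup_{u∈(0,1)} ψ_α(q(u))/φ_α(u))^{β−1}, assumed finite and positive, and assume the defining integrals are finite and positive. Then: (i) ξ_{1,α}·R^α_β(X) ≤ R^α_β(T) ≤ ξ_{2,α}·R^α_β(X) when {α > 1, 0 < β ≤ 1} or {0 < α < 1, β ≥ 1}; (ii) ξ_{1,α}·R^α_β(X) ≥ R^α_β(T) ≥ ξ_{2,α}·R^α_β(X) when {α > 1, β ≥ 1} or {0 < α < 1, 0 <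 β ≤ 1}. -/
open MeasureTheory Set

/-- bounds on the RIGF of a coherent system in terms of the RIGF of a
component, via `ξ_{1,α} = (inf_{u∈(0,1)} q'(u)^α)^(β-1)` and
`ξ_{2,α} = (sup_{u∈(0,1)} q'(u)^α)^(β-1)` (the ratio `ψ_α(q(u))/φ_α(u) = q'(u)^α`):
`ξ_{1,α} R^α_β(X) ≤ R^α_β(T) ≤ ξ_{2,α} R^α_β(X)` when `{α > 1, 0 < β ≤ 1}` or
`{0 < α < 1, β ≥ 1}`, with the reversed chain when `{α > 1, β ≥ 1}` or
`{0 < α < 1, 0 < β ≤ 1}`. -/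
theorem rigf_coherent_bounds (f F Finv q q' : ℝ → ℝ) (α β : ℝ)
    (hα : 0 < α) (hα1 : α ≠ 1) (hβ : 0 < β)
    (hf_nonneg : ∀ x, 0 ≤ f x)
    (hf_pdf : ∫ x in Ioi (0:ℝ), f x = 1)
    (hF_cont : Continuous F) (hF_mono : StrictMono F)
    (hFinv : ∀ u ∈ Ioo (0:ℝ) 1, F (Finv u) = u)
    (hq_mono : MonotoneOn q (Icc (0:ℝ) 1)) (hq0 : q 0 = 0) (hq1 : q 1 = 1)
    (hq_maps : ∀ u ∈ Icc (0:ℝ) 1, q u ∈ Icc (0:ℝ) 1)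
    (hq_deriv : ∀ u ∈ Ioo (0:ℝ) 1, HasDerivAt q (q' u) u)
    (hq'_cont : ContinuousOn q' (Ioo (0:ℝ) 1))
    (hintT : IntegrableOn (fun u => (q' u) ^ α * f (Finv u) ^ (α-1)) (Ioo (0:ℝ) 1))
    (hposT : 0 < ∫ u in Ioo (0:ℝ) 1, (q' u) ^ α * f (Finv u) ^ (α-1))
    (hintX : IntegrableOn (fun u => f (Finv u) ^ (α-1)) (Ioo (0:ℝ) 1))
    (hposX : 0 < ∫ u in Ioo (0:ℝ) 1, f (Finv u) ^ (α-1))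
    (hbdd : BddAbove ((fun u => (q' u) ^ α) '' Ioo (0:ℝ) 1))
    (hinf_pos : 0 < sInf ((fun u => (q' u) ^ α) '' Ioo (0:ℝ) 1)) :
    (((1 < α ∧ β ≤ 1) ∨ (α < 1 ∧ 1 ≤ β)) →
      (sInf ((fun u => (q' u) ^ α) '' Ioo (0:ℝ) 1)) ^ (β-1) *
          ((1/(1-α)) * (∫ u in Ioo (0:ℝ) 1, f (Finv u) ^ (α-1)) ^ (β-1))
        ≤ (1/(1-α)) * (∫ u in Ioo (0:ℝ) 1, (q' u) ^ α * f (Finv u) ^ (α-1)) ^ (β-1)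
      ∧ (1/(1-α)) * (∫ u in Ioo (0:ℝ) 1, (q' u) ^ α * f (Finv u) ^ (α-1)) ^ (β-1)
        ≤ (sSup ((fun u => (q' u) ^ α) '' Ioo (0:ℝ) 1)) ^ (β-1) *
            ((1/(1-α)) * (∫ u in Ioo (0:ℝ) 1, f (Finv u) ^ (α-1)) ^ (β-1)))
    ∧ (((1 < α ∧ 1 ≤ β) ∨ (α < 1 ∧ β ≤ 1)) →
      (1/(1-α)) * (∫ u in Ioo (0:ℝ) 1, (q' u) ^ α * f (Finv u) ^ (α-1)) ^ (β-1)
        ≤ (sInf ((fun u => (q' u) ^ α) '' Ioo (0:ℝ) 1)) ^ (β-1) *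
            ((1/(1-α)) * (∫ u in Ioo (0:ℝ) 1, f (Finv u) ^ (α-1)) ^ (β-1))
      ∧ (sSup ((fun u => (q' u) ^ α) '' Ioo (0:ℝ) 1)) ^ (β-1) *
            ((1/(1-α)) * (∫ u in Ioo (0:ℝ) 1, f (Finv u) ^ (α-1)) ^ (β-1))
        ≤ (1/(1-α)) * (∫ u in Ioo (0:ℝ) 1, (q' u) ^ α * f (Finv u) ^ (α-1)) ^ (β-1)) := by
  set S := (fun u => (q' u) ^ α) '' Ioo (0:ℝ) 1 with hS
  have hne : S.Nonempty := ⟨q' (1/2) ^ α, ⟨1/2, by norm_num, rfl⟩⟩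
  have hbb : BddBelow S := by
    by_contra h
    rw [csInf_of_not_bddBelow h, Real.sInf_empty] at hinf_pos
    exact lt_irrefl 0 hinf_pos
  set m := sInf S with hm_def
  set M := sSup S with hM_def
  have hm : 0 < m := hinf_pos
  have hM : 0 < M := lt_of_lt_of_le hm (csInf_le_csSup hne hbb hbdd)
  set B := ∫ u in Ioo (0:ℝ) 1, f (Finv u) ^ (α-1) with hB_def
  set A := ∫ u in Ioo (0:ℝ) 1, (q' u) ^ α * f (Finv u) ^ (α-1) with hA_def
  have hlow : m * B ≤ A := by
    rw [hB_def, ← integral_const_mul]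
    apply setIntegral_mono_on (hintX.const_mul m) hintT measurableSet_Ioo
    intro u hu
    exact mul_le_mul_of_nonneg_right (csInf_le hbb ⟨u, hu, rfl⟩)
      (Real.rpow_nonneg (hf_nonneg _) _)
  have hhigh : A ≤ M * B := by
    rw [hB_def, ← integral_const_mul]
    apply setIntegral_mono_on hintT (hintX.const_mul M) measurableSet_Ioo
    intro u hu
    exact mul_le_mul_of_nonneg_right (le_csSup hbdd ⟨u, hu, rfl⟩)
      (Real.rpow_nonneg (hf_nonneg _) _)
  have hmB : 0 < m * B := mul_pos hm hposX
  have hA : 0 < A := hposT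
  have hAMB : 0 < M * B := lt_of_lt_of_le hA hhigh
  have hmBeq : m ^ (β-1) * ((1/(1-α)) * B ^ (β-1)) = (1/(1-α)) * (m*B) ^ (β-1) := by
    rw [Real.mul_rpow hm.le hposX.le]; ring
  have hMBeq : M ^ (β-1) * ((1/(1-α)) * B ^ (β-1)) = (1/(1-α)) * (M*B) ^ (β-1) := by
    rw [Real.mul_rpow hM.le hposX.le]; ring
  constructor
  · rintro (⟨ha, hb⟩ | ⟨ha, hb⟩)
    · have hc : (1/(1-α)) ≤ 0 := le_of_lt (div_neg_of_pos_of_neg one_pos (by linarith))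
      constructor
      · rw [hmBeq]
        exact mul_le_mul_of_nonpos_left
          (Real.rpow_le_rpow_of_nonpos hmB hlow (by linarith)) hc
      · rw [hMBeq]
        exact mul_le_mul_of_nonpos_left
          (Real.rpow_le_rpow_of_nonpos hA hhigh (by linarith)) hc
    · have hc : 0 ≤ (1/(1-α)) := le_of_lt (div_pos one_pos (by linarith))
      constructor
      · rw [hmBeq]
        exact mul_le_mul_of_nonneg_left
          (Real.rpow_le_rpow hmB.le hlow (by linarith)) hc
      · rw [hMBeq]
        exact mul_le_mul_of_nonneg_left
          (Real.rpow_le_rpow hA.le hhigh (by linarith)) hc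
  · rintro (⟨ha, hb⟩ | ⟨ha, hb⟩)
    · have hc : (1/(1-α)) ≤ 0 := le_of_lt (div_neg_of_pos_of_neg one_pos (by linarith))
      constructor
      · rw [hmBeq]
        exact mul_le_mul_of_nonpos_left
          (Real.rpow_le_rpow hmB.le hlow (by linarith)) hc
      · rw [hMBeq]
        exact mul_le_mul_of_nonpos_left
          (Real.rpow_le_rpow hA.le hhigh (by linarith)) hc
    · have hc : 0 ≤ (1/(1-α)) := le_of_lt (div_pos one_pos (by linarith))
      constructor
      · rw [hmBeq]
        exact mul_le_mul_of_nonneg_left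
          (Real.rpow_le_rpow_of_nonpos hmB hlow (by linarith)) hc
      · rw [hMBeq]
        exact mul_le_mul_of_nonneg_left
          (Real.rpow_le_rpow_of_nonpos hA hhigh (by linarith)) hc
end
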